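/- For any tree T with at least two vertices, the monophonic position number of T equals the number of leaves of T. -/

import Mathlib

open SimpleGraph

/-- A walk is an *induced (monophonic) path* if it is a path and vertices on the
walk are adjacent in `G` exactly when they are consecutive on the walk. -/
def IsInducedPathW {V : Type*} (G : SimpleGraph V) {u v : V} (p : G.Walk u v) : Prop :=
  p.IsPath ∧ ∀ a b : V, a ∈ p.support → b ∈ p.support → (G.Adj a b ↔ p.toSubgraph.Adj a b)

/-- A walk is a *geodesic* if it is a shortest path between its endpoints. -/
def IsGeodesicW {V : Type*} (G : SimpleGraph V) {u v : V} (p : G.Walk u v) : Prop :=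
  p.IsPath ∧ p.length = G.dist u v

/-- A set of vertices is in *monophonic position* if no induced path of `G`
contains more than two of its vertices. -/
def IsMpSet {V : Type*} (G : SimpleGraph V) (S : Set V) : Prop :=
  ∀ ⦃u v : V⦄ (p : G.Walk u v), IsInducedPathW G p → (S ∩ {x | x ∈ p.support}).ncard ≤ 2

/-- A set of vertices is in *general position* if no geodesic of `G` contains
more than two of its vertices. -/
def IsGpSet {V : Type*} (G : SimpleGraph V) (S : Set V) : Prop :=
  ∀ ⦃u v : V⦄ (p : G.Walk u v), IsGeodesicW G p → (S ∩ {x | x ∈ p.support}).ncard ≤ 2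

/-- The monophonic position number `mp(G)`. -/
noncomputable def mpNum {V : Type*} (G : SimpleGraph V) : ℕ :=
  sSup {n | ∃ S : Set V, IsMpSet G S ∧ S.ncard = n}

/-- The general position number `gp(G)`. -/
noncomputable def gpNum {V : Type*} (G : SimpleGraph V) : ℕ :=
  sSup {n | ∃ S : Set V, IsGpSet G S ∧ S.ncard = n}


open SimpleGraph Walk Finset

namespace TreeMPAux

variable {V : Type*} [Fintype V] [DecidableEq V] {G : SimpleGraph V}

lemma walk_unique (hT : G.IsTree) {u v : V} {p q : G.Walk u v}
    (hp : p.IsPath) (hq : q.IsPath) : p = q := by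
  obtain ⟨r, -, hr⟩ := hT.existsUnique_path u v
  rw [hr p hp, hr q hq]

/-- The unique path between two vertices of a tree. -/
noncomputable def pth (hT : G.IsTree) (u v : V) : G.Walk u v :=
  (hT.existsUnique_path u v).choose

lemma pth_isPath (hT : G.IsTree) (u v : V) : (pth hT u v).IsPath :=
  (hT.existsUnique_path u v).choose_spec.1

lemma pth_eq (hT : G.IsTree) {u v : V} {q : G.Walk u v} (hq : q.IsPath) :
    pth hT u v = q :=
  walk_unique hT (pth_isPath hT u v) hq

/-- In a tree, two adjacent vertices on a path are joined by an edge of the path. -/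
lemma adj_mem_edges (hT : G.IsTree) {u v a b : V} {p : G.Walk u v} (hp : p.IsPath)
    (hab : G.Adj a b) (ha : a ∈ p.support) (hb : b ∈ p.support) : s(a, b) ∈ p.edges := by
  by_contra he
  have key : ∀ (r : G.Walk a b), r.IsPath → r.edges ⊆ p.edges → False := by
    intro r hr hsub
    have he' : s(b, a) ∉ r.edges := by
      rw [Sym2.eq_swap]
      exact fun h => he (hsub h)
    have hc := SimpleGraph.Path.cons_isCycle ⟨r, hr⟩ hab.symm he'
    exact hT.IsAcyclic _ hc
  by_cases hab' : a ∈ (p.takeUntil b hb).support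
  · exact key ((p.takeUntil b hb).dropUntil a hab')
      ((hp.takeUntil hb).dropUntil hab')
      (fun e hx => (p.edges_takeUntil_subset hb)
        ((p.takeUntil b hb).edges_dropUntil_subset hab' hx))
  · have ha' : a ∈ (p.dropUntil b hb).support := by
      have := ha
      rw [← p.take_spec hb, mem_support_append_iff] at this
      exact this.resolve_left hab'
    have : ((p.dropUntil b hb).takeUntil a ha').reverse.edges ⊆ p.edges := by
      intro e hx
      rw [edges_reverse, List.mem_reverse] at hx
      exact (p.edges_dropUntil_subset hb)
        (((p.dropUntil b hb)).edges_takeUntil_subset ha' hx)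
    exact key _ (((hp.dropUntil hb).takeUntil ha').reverse) this

/-- In a tree, every path is an induced path. -/
lemma isInduced_of_isPath (hT : G.IsTree) {u v : V} {p : G.Walk u v} (hp : p.IsPath) :
    IsInducedPathW G p := by
  refine ⟨hp, fun a b ha hb => ⟨fun hab => ?_, fun h => h.adj_sub⟩⟩
  rw [← Subgraph.mem_edgeSet, Walk.mem_edges_toSubgraph]
  exact adj_mem_edges hT hp hab ha hb

end TreeMPAux
section Chunk2
open SimpleGraph Walk Finset
namespace TreeMPAux
variable {V : Type*} [Fintype V] [DecidableEq V] {G : SimpleGraph V}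

lemma two_le_degree_internal [DecidableRel G.Adj] {u w : V} {p : G.Walk u w} (hp : p.IsPath)
    {v : V} (hv : v ∈ p.support) (hvu : v ≠ u) (hvw : v ≠ w) : 2 ≤ G.degree v := by
  induction p with
  | nil => simp at hv; exact absurd hv hvu
  | @cons u m w h q ih =>
    rw [support_cons, List.mem_cons] at hv
    rcases hv with rfl | hv
    · exact absurd rfl hvu
    by_cases hvm : v = m
    · subst hvm
      have hq : ¬ q.Nil := not_nil_of_ne hvw
      obtain ⟨x, h2, q2, rfl⟩ := not_nil_iff.mp hq
      rw [cons_isPath_iff] at hp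
      have hux : u ≠ x := by
        rintro rfl
        exact hp.2 (by simp)
      have hsub : ({u, x} : Finset V) ⊆ G.neighborFinset v := by
        intro z hz
        rw [Finset.mem_insert, Finset.mem_singleton] at hz
        rcases hz with rfl | rfl
        · exact (mem_neighborFinset G v z).mpr h.symm
        · exact (mem_neighborFinset G v z).mpr h2
      calc 2 = ({u, x} : Finset V).card := by rw [Finset.card_insert_of_notMem (by simpa using hux), Finset.card_singleton]
        _ ≤ (G.neighborFinset v).card := Finset.card_le_card hsub
    · exact ih (hp.of_cons) hv hvm hvw

lemma leaves_isMpSet [DecidableRel G.Adj] : IsMpSet G {v | G.degree v = 1} := by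
  intro u v p hp
  have hsub : {x | G.degree x = 1} ∩ {x | x ∈ p.support} ⊆ {u, v} := by
    rintro x ⟨hx1, hx2⟩
    by_contra hx
    simp only [Set.mem_insert_iff, Set.mem_singleton_iff, not_or] at hx
    simp only [Set.mem_setOf_eq] at hx1
    have := two_le_degree_internal hp.1 hx2 hx.1 hx.2
    omega
  calc ({x | G.degree x = 1} ∩ {x | x ∈ p.support}).ncard
      ≤ ({u, v} : Set V).ncard := Set.ncard_le_ncard hsub (Set.toFinite _)
    _ ≤ 2 := by
        have := Set.ncard_insert_le u ({v} : Set V)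
        simpa [Set.ncard_singleton] using this

/-- `x` lies in direction `a` from `s` (where `a` is a neighbour of `s`):
the unique path from `a` to `x` avoids `s`. -/
def Dir (hT : G.IsTree) (s a x : V) : Prop := s ∉ (pth hT a x).support

lemma pth_eq_cons (hT : G.IsTree) {s a x : V} (h : G.Adj s a) (hD : Dir hT s a x) :
    pth hT s x = Walk.cons h (pth hT a x) :=
  pth_eq hT ((pth_isPath hT a x).cons hD)

lemma cons_inj_start {s a c x : V} {h1 : G.Adj s a} {h2 : G.Adj s c}
    {p1 : G.Walk a x} {p2 : G.Walk c x}
    (h : Walk.cons h1 p1 = Walk.cons h2 p2) : a = c := by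
  have := congrArg Walk.support h
  rw [support_cons, support_cons, p1.support_eq_cons, p2.support_eq_cons] at this
  injection this with _ this
  exact (List.cons_eq_cons.mp this).1

end TreeMPAux
end Chunk2
section Chunk3
open SimpleGraph Walk Finset
namespace TreeMPAux
variable {V : Type*} [Fintype V] [DecidableEq V] {G : SimpleGraph V}

lemma exists_dir (hT : G.IsTree) {s t : V} (hst : s ≠ t) :
    ∃ a, G.Adj s a ∧ Dir hT s a t := by
  have hnil : ¬ (pth hT s t).Nil := not_nil_of_ne hst
  obtain ⟨a, h, q, hq⟩ := not_nil_iff.mp hnil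
  have hp : (Walk.cons h q).IsPath := hq ▸ pth_isPath hT s t
  rw [cons_isPath_iff] at hp
  refine ⟨a, h, ?_⟩
  unfold Dir
  rw [pth_eq hT hp.1]
  exact hp.2

lemma dir_unique (hT : G.IsTree) {s a c t : V} (h1 : G.Adj s a) (h2 : G.Adj s c)
    (Da : Dir hT s a t) (Dc : Dir hT s c t) : a = c :=
  cons_inj_start ((pth_eq_cons hT h1 Da).symm.trans (pth_eq_cons hT h2 Dc))

/-- Two paths leaving `s` in different directions meet only at `s`. -/
lemma meet_only_at (hT : G.IsTree) {s a c x t : V} (ha : G.Adj s a) (hc : G.Adj s c)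
    (hac : a ≠ c) (Dx : Dir hT s a x) (Dt : Dir hT s c t) :
    ∀ z, z ∈ (pth hT a x).support → z ∈ (pth hT c t).support → False := by
  intro z hz1 hz2
  have hs1 : s ∉ ((pth hT a x).takeUntil z hz1).support :=
    fun hmem => Dx ((pth hT a x).support_takeUntil_subset hz1 hmem)
  have hs2 : s ∉ ((pth hT c t).takeUntil z hz2).support :=
    fun hmem => Dt ((pth hT c t).support_takeUntil_subset hz2 hmem)
  have key : Walk.cons ha ((pth hT a x).takeUntil z hz1) =
      Walk.cons hc ((pth hT c t).takeUntil z hz2) :=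
    walk_unique hT (((pth_isPath hT a x).takeUntil hz1).cons hs1)
      (((pth_isPath hT c t).takeUntil hz2).cons hs2)
  exact hac (cons_inj_start key)

/-- If `x` and `t` lie in different directions from `s`, then `s` lies on the
path from `t` to `x`. -/
lemma mem_pth_of_dirs (hT : G.IsTree) {s a c x t : V} (ha : G.Adj s a) (hc : G.Adj s c)
    (hac : a ≠ c) (Dx : Dir hT s a x) (Dt : Dir hT s c t) :
    s ∈ (pth hT t x).support := by
  set P1 : G.Walk s x := Walk.cons ha (pth hT a x) with hP1
  set P2 : G.Walk s t := Walk.cons hc (pth hT c t) with hP2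
  have hP1p : P1.IsPath := (pth_isPath hT a x).cons Dx
  have hP2p : P2.IsPath := (pth_isPath hT c t).cons Dt
  have w : G.Walk t x := P2.reverse.append P1
  have hw : (P2.reverse.append P1).IsPath := by
    rw [isPath_def, support_append, support_reverse]
    apply List.Nodup.append
    · exact List.nodup_reverse.mpr ((isPath_def _).mp hP2p)
    · have : P1.support.tail = (pth hT a x).support := by
        rw [hP1, support_cons, List.tail_cons]
      rw [this]
      exact (isPath_def _).mp (pth_isPath hT a x)
    · intro z hz1 hz2
      rw [List.mem_reverse] at hz1
      have hz1' : z ∈ (pth hT c t).support := by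
        have : z ≠ s := by
          rintro rfl
          have : P1.support.tail = (pth hT a x).support := by rw [hP1, support_cons, List.tail_cons]
          rw [this] at hz2
          exact Dx hz2
        rw [hP2, support_cons, List.mem_cons] at hz1
        exact hz1.resolve_left this
      have hz2' : z ∈ (pth hT a x).support := by
        have : P1.support.tail = (pth hT a x).support := by rw [hP1, support_cons, List.tail_cons]
        rwa [this] at hz2
      exact meet_only_at hT ha hc hac Dx Dt z hz2' hz1'
  rw [pth_eq hT hw, mem_support_append_iff, support_reverse, List.mem_reverse]
  left
  exact start_mem_support P2

end TreeMPAux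
end Chunk3
section Chunk4
open SimpleGraph Walk Finset
namespace TreeMPAux
variable {V : Type*} [Fintype V] [DecidableEq V] {G : SimpleGraph V}

lemma three_le_of_mem {S : Set V} {t1 s t2 : V} (h1 : t1 ∈ S) (h2 : s ∈ S) (h3 : t2 ∈ S)
    (h12 : t1 ≠ s) (h13 : t1 ≠ t2) (h23 : s ≠ t2) : 3 ≤ S.ncard := by
  have hsub : ({t1, s, t2} : Set V) ⊆ S := by
    rintro z (rfl | rfl | rfl) <;> assumption
  have h3c : ({t1, s, t2} : Set V).ncard = 3 := by
    rw [Set.ncard_insert_of_notMem (by simp [h12, h13]) (Set.toFinite _),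
        Set.ncard_insert_of_notMem (by simp [h23]) (Set.toFinite _),
        Set.ncard_singleton]
  calc 3 = ({t1, s, t2} : Set V).ncard := h3c.symm
    _ ≤ S.ncard := Set.ncard_le_ncard hsub (Set.toFinite _)

lemma exists_free_dir [DecidableRel G.Adj] (hT : G.IsTree) (h2 : 2 ≤ Fintype.card V)
    {S : Set V} (hS : IsMpSet G S) {s : V} (hs : s ∈ S) (hdeg : G.degree s ≠ 1) :
    ∃ a, G.Adj s a ∧ ∀ t ∈ S, t ≠ s → ¬ Dir hT s a t := by
  -- the degree of s is at least 2
  obtain ⟨w, hw⟩ := Fintype.exists_ne_of_one_lt_card (by omega) s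
  obtain ⟨a0, ha0, -⟩ := exists_dir hT hw.symm
  have hdeg1 : 1 ≤ G.degree s := by
    rw [← card_neighborFinset_eq_degree]
    exact Finset.card_pos.mpr ⟨a0, (mem_neighborFinset G s a0).mpr ha0⟩
  have hdeg2 : 2 ≤ G.degree s := by omega
  rw [← card_neighborFinset_eq_degree] at hdeg2
  obtain ⟨a, haf, b, hbf, hab⟩ := Finset.one_lt_card.mp (show 1 < (G.neighborFinset s).card by omega)
  rw [mem_neighborFinset] at haf hbf
  by_contra hcon
  push_neg at hcon
  obtain ⟨ta, hta, htas, Dta⟩ := hcon a haf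
  obtain ⟨tb, htb, htbs, Dtb⟩ := hcon b hbf
  have htab : ta ≠ tb := by
    rintro rfl
    exact hab (dir_unique hT haf hbf Dta Dtb)
  have hmem : s ∈ (pth hT ta tb).support := mem_pth_of_dirs hT hbf haf hab.symm Dtb Dta
  have := hS (pth hT ta tb) (isInduced_of_isPath hT (pth_isPath hT ta tb))
  have h3 : 3 ≤ (S ∩ {x | x ∈ (pth hT ta tb).support}).ncard := by
    refine three_le_of_mem ⟨hta, ?_⟩ ⟨hs, hmem⟩ ⟨htb, ?_⟩ htas htab (Ne.symm htbs)
    · exact start_mem_support _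
    · exact end_mem_support _
  omega

lemma edge_start_unique {x s : V} {r : G.Walk x s} (hr : r.IsPath) {y z : V}
    (hy : s(x, y) ∈ r.edges) (hz : s(x, z) ∈ r.edges) : y = z := by
  induction r with
  | nil => simp at hy
  | @cons x m s h q ih =>
    rw [cons_isPath_iff] at hr
    have hxg : x ∉ q.support := hr.2
    have hhy : y = m := by
      rw [edges_cons, List.mem_cons] at hy
      rcases hy with hy | hy
      · exact Sym2.congr_right.mp hy
      · exact absurd (q.fst_mem_support_of_mem_edges hy) hxg
    have hhz : z = m := by
      rw [edges_cons, List.mem_cons] at hz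
      rcases hz with hz | hz
      · exact Sym2.congr_right.mp hz
      · exact absurd (q.fst_mem_support_of_mem_edges hz) hxg
    rw [hhy, hhz]

lemma exists_leaf_dir [DecidableRel G.Adj] (hT : G.IsTree) {s a : V} (h : G.Adj s a) :
    ∃ x, G.degree x = 1 ∧ Dir hT s a x := by
  classical
  set F : Finset V := Finset.univ.filter (fun x => s ∉ (pth hT a x).support) with hF
  have haF : a ∈ F := by
    rw [hF, Finset.mem_filter]
    refine ⟨Finset.mem_univ _, ?_⟩
    rw [pth_eq hT (IsPath.nil : (Walk.nil : G.Walk a a).IsPath)]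
    simp [h.ne]
  obtain ⟨x, hxF, hmax⟩ := Finset.exists_max_image F (fun x => (pth hT a x).length) ⟨a, haF⟩
  rw [hF, Finset.mem_filter] at hxF
  have Dx : Dir hT s a x := hxF.2
  refine ⟨x, ?_, Dx⟩
  set P : G.Walk s x := Walk.cons h (pth hT a x) with hP
  have hPp : P.IsPath := (pth_isPath hT a x).cons Dx
  have hxs : x ≠ s := by
    rintro rfl
    exact Dx ((pth hT a x).end_mem_support)
  -- every neighbour of x lies on P
  have hnb : ∀ y, G.Adj x y → y ∈ P.support := by
    intro y hy
    by_contra hyP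
    have hysub : y ∉ (pth hT a x).support := fun hmem => hyP (by
      rw [hP, support_cons]; exact List.mem_cons_of_mem _ hmem)
    have hys : y ≠ s := by
      rintro rfl
      exact hyP (start_mem_support P)
    have hconc : ((pth hT a x).concat hy).IsPath := by
      rw [isPath_def, support_concat]
      exact List.Nodup.append ((isPath_def _).mp (pth_isPath hT a x))
        (List.nodup_singleton y)
        (by intro z hz1 hz2; rw [List.mem_singleton] at hz2; subst hz2; exact hysub hz1)
    have hDy : s ∉ (pth hT a y).support := by
      rw [pth_eq hT hconc, support_concat]
      intro hmem
      rcases List.mem_append.mp hmem with hmem | hmem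
      · exact Dx hmem
      · rw [List.mem_singleton] at hmem; exact hys hmem.symm
    have hyF : y ∈ F := by rw [hF, Finset.mem_filter]; exact ⟨Finset.mem_univ _, hDy⟩
    have := hmax y hyF
    rw [pth_eq hT hconc, length_concat] at this
    omega
  -- x has a neighbour m (the penultimate vertex)
  have hrnil : ¬ P.reverse.Nil := not_nil_of_ne hxs
  obtain ⟨m, hm, q, hq⟩ := not_nil_iff.mp hrnil
  have hrp : P.reverse.IsPath := hPp.reverse
  -- any neighbour equals m
  have huniq : ∀ y, G.Adj x y → y = m := by
    intro y hy
    have hyP : y ∈ P.support := hnb y hy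
    have hedge : s(x, y) ∈ P.edges := adj_mem_edges hT hPp hy (end_mem_support P) hyP
    have hedge' : s(x, y) ∈ P.reverse.edges := by
      rw [edges_reverse, List.mem_reverse]; exact hedge
    have hmedge : s(x, m) ∈ P.reverse.edges := by
      rw [hq, edges_cons]; exact List.mem_cons_self
    exact edge_start_unique hrp hedge' hmedge
  have hmadj : G.Adj x m := by
    have := hq ▸ hrp
    exact hm
  rw [← card_neighborFinset_eq_degree]
  rw [Finset.card_eq_one]
  refine ⟨m, Finset.eq_singleton_iff_unique_mem.mpr ⟨?_, ?_⟩⟩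
  · exact (mem_neighborFinset G x m).mpr hmadj
  · intro y hyn
    exact huniq y ((mem_neighborFinset G x y).mp hyn)

end TreeMPAux
end Chunk4
section Chunk5
open SimpleGraph Walk Finset
namespace TreeMPAux
variable {V : Type*} [Fintype V] [DecidableEq V] {G : SimpleGraph V}

lemma mp_le [DecidableRel G.Adj] (hT : G.IsTree) (h2 : 2 ≤ Fintype.card V) {S : Set V}
    (hS : IsMpSet G S) : S.ncard ≤ (Finset.univ.filter fun v => G.degree v = 1).card := by
  classical
  have key : ∀ s ∈ S, ∃ x, G.degree x = 1 ∧ (x = s ∨ ∃ a, G.Adj s a ∧ Dir hT s a x ∧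
      ∀ t ∈ S, t ≠ s → ¬ Dir hT s a t) := by
    intro s hs
    by_cases hdeg : G.degree s = 1
    · exact ⟨s, hdeg, Or.inl rfl⟩
    · obtain ⟨a, ha, hfree⟩ := exists_free_dir hT h2 hS hs hdeg
      obtain ⟨x, hx, hdx⟩ := exists_leaf_dir hT ha
      exact ⟨x, hx, Or.inr ⟨a, ha, hdx, hfree⟩⟩
  choose f hf1 hf2 using key
  have hinj : ∀ s (hs : s ∈ S) t (ht : t ∈ S), f s hs = f t ht → s = t := by
    intro s hs t ht hft
    by_contra hst
    rcases hf2 s hs with hcase1 | ⟨a, ha, hdax, hfreeS⟩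
    · rcases hf2 t ht with hcase2 | ⟨c, hc, hdcx, hfreeT⟩
      · exact hst (hcase1.symm.trans (hft.trans hcase2))
      · refine hfreeT s hs hst ?_
        have : f t ht = s := hft.symm.trans hcase1
        rwa [this] at hdcx
    · rcases hf2 t ht with hcase2 | ⟨c, hc, hdcx, hfreeT⟩
      · refine hfreeS t ht (fun h => hst h.symm) ?_
        have : f s hs = t := hft.trans hcase2
        rwa [this] at hdax
      · -- both internal vertices
        rw [hft] at hdax
        set x := f t ht with hx
        obtain ⟨b, hb, hdbt⟩ := exists_dir hT hst
        have hba : a ≠ b := by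
          rintro rfl
          exact hfreeS t ht (fun h => hst h.symm) hdbt
        have hmem : s ∈ (pth hT t x).support := mem_pth_of_dirs hT ha hb hba hdax hdbt
        rw [pth_eq_cons hT hc hdcx, support_cons, List.mem_cons] at hmem
        rcases hmem with hmem | hmem
        · exact hst hmem
        · refine hfreeT s hs hst ?_
          unfold Dir
          rw [walk_unique hT (pth_isPath hT c s) ((pth_isPath hT c x).takeUntil hmem)]
          intro hcon
          exact hdcx ((pth hT c x).support_takeUntil_subset hmem hcon)
  -- conclude with an injection into the set of leaves
  have hfin : S.Finite := S.toFinite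
  rw [Set.ncard_eq_toFinset_card _ hfin]
  set g : V → V := fun s => if h : s ∈ S then f s h else s with hg
  apply Finset.card_le_card_of_injOn g
  · intro s hsm
    rw [Finset.mem_coe, Set.Finite.mem_toFinset] at hsm
    rw [Finset.mem_coe, Finset.mem_filter]
    refine ⟨Finset.mem_univ _, ?_⟩
    rw [hg]
    dsimp only
    convert hf1 s hsm using 2
    exact dif_pos hsm
  · intro s hsm t htm h
    rw [Finset.mem_coe, Set.Finite.mem_toFinset] at hsm htm
    rw [hg] at h
    dsimp only at h
    rw [dif_pos hsm, dif_pos htm] at h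
    exact hinj s hsm t htm h

end TreeMPAux
end Chunk5

theorem tree_mp_eq_leaves {V : Type*} [Fintype V] [DecidableEq V]
    (G : SimpleGraph V) [DecidableRel G.Adj] (hT : G.IsTree) (h2 : 2 ≤ Fintype.card V) :
    mpNum G = (Finset.univ.filter fun v => G.degree v = 1).card := by
  classical
  set L := (Finset.univ.filter fun v => G.degree v = 1).card with hL
  have hmem : L ∈ {n | ∃ S : Set V, IsMpSet G S ∧ S.ncard = n} := by
    refine ⟨↑(Finset.univ.filter fun v => G.degree v = 1), ?_, ?_⟩
    · have hset : (↑(Finset.univ.filter fun v => G.degree v = 1) : Set V) =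
          {v | G.degree v = 1} := by
        ext v; simp
      rw [hset]
      exact TreeMPAux.leaves_isMpSet
    · rw [Set.ncard_coe_finset]
  have hub : ∀ n ∈ {n | ∃ S : Set V, IsMpSet G S ∧ S.ncard = n}, n ≤ L := by
    rintro n ⟨S, hS, rfl⟩
    exact TreeMPAux.mp_le hT h2 hS
  unfold mpNum
  exact le_antisymm (csSup_le ⟨L, hmem⟩ hub) (le_csSup ⟨L, hub⟩ hmem)
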